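/- (Moreau–Rockafellar theorem.) Let E be a finite-dimensional real normed space and let f₁, …, f_k : E → ℝ be convex functions. Then for every a ∈ E, the subdifferential of the sum equals the Minkowski sum of the subdifferentials: ∂(f₁ + ⋯ + f_k)(a) = ∂f₁(a) + ⋯ + ∂f_k(a). -/

import Mathlib

/-- The subdifferential of a convex function `f : E → ℝ` at a point `a`. -/
def subdifferential {E : Type*} [NormedAddCommGroup E] [NormedSpace ℝ E]
    (f : E → ℝ) (a : E) : Set (E →L[ℝ] ℝ) :=
  {φ | ∀ x : E, φ (x - a) ≤ f x - f a}

open Set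


namespace MRaux

variable {E : Type*} [NormedAddCommGroup E] [NormedSpace ℝ E]

/-- difference quotient in direction `v` -/
noncomputable def dq (f : E → ℝ) (a v : E) (t : ℝ) : ℝ := (f (a + t • v) - f a) / t

lemma dq_mono {f : E → ℝ} (hf : ConvexOn ℝ Set.univ f) (a v : E) {s t : ℝ}
    (hs : 0 < s) (hst : s ≤ t) : dq f a v s ≤ dq f a v t := by
  have ht : 0 < t := hs.trans_le hst
  have hl : a + s • v = (1 - s/t) • a + (s/t) • (a + t • v) := by
    have h : s / t * t = s := div_mul_cancel₀ _ ht.ne'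
    rw [smul_add, smul_smul, h]
    module
  have hle : s / t ≤ 1 := (div_le_one ht).2 hst
  have hc := hf.2 (mem_univ a) (mem_univ (a + t • v))
      (by linarith : (0:ℝ) ≤ 1 - s/t) (by positivity : (0:ℝ) ≤ s/t) (by ring)
  rw [← hl] at hc
  simp only [smul_eq_mul] at hc
  have hc2 : t * f (a + s • v) ≤ (t - s) * f a + s * f (a + t • v) := by
    have h2 := mul_le_mul_of_nonneg_left hc ht.le
    rw [mul_add] at h2
    have e1 : t * ((1 - s/t) * f a) = (t - s) * f a := by field_simp; try ring
    have e2 : t * (s/t * f (a + t • v)) = s * f (a + t • v) := by field_simp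
    linarith
  unfold dq
  rw [div_le_div_iff₀ hs ht]
  linarith

lemma dq_lower {f : E → ℝ} (hf : ConvexOn ℝ Set.univ f) (a v : E) {t : ℝ}
    (ht : 0 < t) : f a - f (a - v) ≤ dq f a v t := by
  have h1 : (0:ℝ) < t + 1 := by linarith
  have hl : a = (t/(t+1)) • (a - v) + (1/(t+1)) • (a + t • v) := by
    match_scalars <;> field_simp <;> ring
  have hc := hf.2 (mem_univ (a - v)) (mem_univ (a + t • v))
      (by positivity : (0:ℝ) ≤ t/(t+1)) (by positivity : (0:ℝ) ≤ 1/(t+1))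
      (by field_simp)
  rw [← hl] at hc
  simp only [smul_eq_mul] at hc
  have hc2 : (t+1) * f a ≤ t * f (a - v) + f (a + t • v) := by
    have h2 := mul_le_mul_of_nonneg_left hc h1.le
    rw [mul_add] at h2
    have e1 : (t+1) * (t/(t+1) * f (a-v)) = t * f (a-v) := by field_simp; try ring
    have e2 : (t+1) * (1/(t+1) * f (a + t • v)) = f (a + t • v) := by field_simp
    linarith
  unfold dq
  rw [le_div_iff₀ ht]
  linarith

/-- the (one-sided) directional derivative -/
noncomputable def dd (f : E → ℝ) (a v : E) : ℝ := sInf (dq f a v '' Ioi 0)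

lemma dd_nonempty (f : E → ℝ) (a v : E) : (dq f a v '' Ioi 0).Nonempty :=
  ⟨dq f a v 1, 1, by norm_num, rfl⟩

lemma dd_bddBelow {f : E → ℝ} (hf : ConvexOn ℝ Set.univ f) (a v : E) :
    BddBelow (dq f a v '' Ioi 0) := by
  refine ⟨f a - f (a - v), ?_⟩
  rintro x ⟨t, ht, rfl⟩
  exact dq_lower hf a v ht

lemma dd_le_dq {f : E → ℝ} (hf : ConvexOn ℝ Set.univ f) (a v : E) {t : ℝ} (ht : 0 < t) :
    dd f a v ≤ dq f a v t :=
  csInf_le (dd_bddBelow hf a v) ⟨t, ht, rfl⟩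

lemma le_dd {f : E → ℝ} (a v : E) {c : ℝ} (h : ∀ t : ℝ, 0 < t → c ≤ dq f a v t) :
    c ≤ dd f a v :=
  le_csInf (dd_nonempty f a v) (by rintro x ⟨t, ht, rfl⟩; exact h t ht)

lemma exists_dq_lt {f : E → ℝ} (a v : E) {ε : ℝ} (hε : 0 < ε) :
    ∃ t : ℝ, 0 < t ∧ dq f a v t < dd f a v + ε := by
  have h : dd f a v < dd f a v + ε := by linarith
  obtain ⟨x, hx, hlt⟩ := exists_lt_of_csInf_lt (dd_nonempty f a v) h
  obtain ⟨t, ht, rfl⟩ := hx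
  exact ⟨t, ht, hlt⟩

lemma dd_le_sub {f : E → ℝ} (hf : ConvexOn ℝ Set.univ f) (a v : E) :
    dd f a v ≤ f (a + v) - f a := by
  have := dd_le_dq hf a v (t := 1) one_pos
  simpa [dq] using this

lemma dd_zero {f : E → ℝ} (hf : ConvexOn ℝ Set.univ f) (a : E) : dd f a 0 = 0 := by
  have h1 : ∀ t : ℝ, dq f a 0 t = 0 := by intro t; simp [dq]
  refine le_antisymm ?_ ?_
  · have := dd_le_dq hf a 0 (t := 1) one_pos; rw [h1] at this; exact this
  · exact le_dd a 0 (fun t ht => (h1 t).ge)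

lemma dq_smul {f : E → ℝ} (a v : E) {c : ℝ} (hc : 0 < c) {t : ℝ} (ht : 0 < t) :
    dq f a (c • v) t = c * dq f a v (c * t) := by
  unfold dq
  rw [smul_smul, mul_comm t c]
  field_simp

lemma dd_smul_le {f : E → ℝ} (hf : ConvexOn ℝ Set.univ f) (a v : E) {c : ℝ} (hc : 0 < c) :
    dd f a (c • v) ≤ c * dd f a v := by
  have h : dd f a (c • v) / c ≤ dd f a v := by
    refine le_dd a v (fun t ht => ?_)
    rw [div_le_iff₀' hc]
    have ht' : (0:ℝ) < t / c := by positivity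
    have h2 := dd_le_dq hf a (c • v) ht'
    rw [dq_smul a v hc ht'] at h2
    have hct : c * (t / c) = t := by field_simp
    rw [hct] at h2
    exact h2
  calc dd f a (c • v) = c * (dd f a (c • v) / c) := by field_simp
  _ ≤ c * dd f a v := by exact mul_le_mul_of_nonneg_left h hc.le

lemma dd_smul {f : E → ℝ} (hf : ConvexOn ℝ Set.univ f) (a v : E) {c : ℝ} (hc : 0 < c) :
    dd f a (c • v) = c * dd f a v := by
  refine le_antisymm (dd_smul_le hf a v hc) ?_
  have h := dd_smul_le hf a (c • v) (c := c⁻¹) (by positivity)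
  rw [smul_smul, inv_mul_cancel₀ hc.ne', one_smul] at h
  have := mul_le_mul_of_nonneg_left h hc.le
  rw [← mul_assoc, mul_inv_cancel₀ hc.ne', one_mul] at this
  linarith

lemma dq_add_le {f : E → ℝ} (hf : ConvexOn ℝ Set.univ f) (a u v : E) {t : ℝ} (ht : 0 < t) :
    dq f a (u + v) t ≤ dq f a u (2*t) + dq f a v (2*t) := by
  have hl : a + t • (u + v) = (1/2 : ℝ) • (a + (2*t) • u) + (1/2 : ℝ) • (a + (2*t) • v) := by
    module
  have hc := hf.2 (mem_univ (a + (2*t) • u)) (mem_univ (a + (2*t) • v))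
      (by norm_num : (0:ℝ) ≤ 1/2) (by norm_num : (0:ℝ) ≤ 1/2) (by norm_num)
  rw [← hl] at hc
  simp only [smul_eq_mul] at hc
  have hc2 : 2 * f (a + t • (u + v)) ≤ f (a + (2*t) • u) + f (a + (2*t) • v) := by
    linarith
  unfold dq
  have h2t : (0:ℝ) < 2*t := by linarith
  rw [div_add_div _ _ h2t.ne' h2t.ne', div_le_div_iff₀ ht (by positivity)]
  nlinarith [mul_le_mul_of_nonneg_left hc2 ht.le]

lemma dd_add_le {f : E → ℝ} (hf : ConvexOn ℝ Set.univ f) (a u v : E) :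
    dd f a (u + v) ≤ dd f a u + dd f a v := by
  refine le_of_forall_pos_le_add (fun ε hε => ?_)
  obtain ⟨t₁, ht₁, h1⟩ := exists_dq_lt (f := f) a u (half_pos hε)
  obtain ⟨t₂, ht₂, h2⟩ := exists_dq_lt (f := f) a v (half_pos hε)
  set t := min t₁ t₂ / 2 with htdef
  have ht : 0 < t := by positivity
  have h2t1 : 2*t ≤ t₁ := by
    have := min_le_left t₁ t₂; rw [htdef]; linarith
  have h2t2 : 2*t ≤ t₂ := by
    have := min_le_right t₁ t₂; rw [htdef]; linarith
  have key := dq_add_le hf a u v ht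
  have m1 : dq f a u (2*t) ≤ dq f a u t₁ := dq_mono hf a u (by linarith) h2t1
  have m2 : dq f a v (2*t) ≤ dq f a v t₂ := dq_mono hf a v (by linarith) h2t2
  have := dd_le_dq hf a (u+v) ht
  linarith

lemma mem_subdiff_of_le_dd {f : E → ℝ} (a : E) (ψ : E →L[ℝ] ℝ)
    (h : ∀ v, ψ v ≤ dd f a v) (hf : ConvexOn ℝ Set.univ f) :
    ψ ∈ subdifferential f a := by
  intro x
  have := (h (x - a)).trans (dd_le_sub hf a (x - a))
  simpa using this

lemma le_dd_of_mem_subdiff {f : E → ℝ} (a : E) (φ : E →L[ℝ] ℝ)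
    (h : φ ∈ subdifferential f a) (v : E) : φ v ≤ dd f a v := by
  refine le_dd a v (fun t ht => ?_)
  have := h (a + t • v)
  simp only [add_sub_cancel_left] at this
  rw [map_smul] at this
  unfold dq
  rw [le_div_iff₀ ht]
  simpa [smul_eq_mul, mul_comm] using this

end MRaux

namespace MRaux

variable {E : Type*} [NormedAddCommGroup E] [NormedSpace ℝ E]

lemma sum_le_dd_add {f g : E → ℝ} (hf : ConvexOn ℝ Set.univ f) (hg : ConvexOn ℝ Set.univ g)
    (a : E) (φ : E →L[ℝ] ℝ) (hφ : φ ∈ subdifferential (fun x => f x + g x) a) (u : E) :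
    φ u ≤ dd f a u + dd g a u := by
  refine le_of_forall_pos_le_add (fun ε hε => ?_)
  obtain ⟨t₁, ht₁, h1⟩ := exists_dq_lt (f := f) a u (half_pos hε)
  obtain ⟨t₂, ht₂, h2⟩ := exists_dq_lt (f := g) a u (half_pos hε)
  set t := min t₁ t₂ with htd
  have ht : 0 < t := lt_min ht₁ ht₂
  have m1 : dq f a u t ≤ dq f a u t₁ := dq_mono hf a u ht (min_le_left _ _)
  have m2 : dq g a u t ≤ dq g a u t₂ := dq_mono hg a u ht (min_le_right _ _)
  have hsum : φ u ≤ dq f a u t + dq g a u t := by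
    have h3 := hφ (a + t • u)
    simp only [add_sub_cancel_left, map_smul, smul_eq_mul] at h3
    unfold dq
    rw [← add_div, le_div_iff₀ ht]
    linarith [h3]
  linarith

lemma two_fun [FiniteDimensional ℝ E] {f g : E → ℝ}
    (hf : ConvexOn ℝ Set.univ f) (hg : ConvexOn ℝ Set.univ g) (a : E) :
    subdifferential (fun x => f x + g x) a =
      {φ | ∃ ψ₁ ∈ subdifferential f a, ∃ ψ₂ ∈ subdifferential g a, φ = ψ₁ + ψ₂} := by
  ext φ
  constructor
  · intro hφ
    set F : E → E → ℝ := fun v u => dd f a u + dd g a (u - v) + φ (v - u) with hF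
    set T : E → ℝ := fun v => sInf (Set.range (F v)) with hT
    have hφsum : ∀ u, φ u ≤ dd f a u + dd g a u := sum_le_dd_add hf hg a φ hφ
    have key : ∀ v u, φ v - dd g a v ≤ F v u := by
      intro v u
      have h1 := hφsum u
      have h2 : dd g a u ≤ dd g a (u - v) + dd g a v := by
        have := dd_add_le hg a (u - v) v
        simpa using this
      have h3 : φ (v - u) = φ v - φ u := by rw [map_sub]
      simp only [hF]
      linarith
    have hbdd : ∀ v, BddBelow (Set.range (F v)) := by
      intro v
      exact ⟨φ v - dd g a v, by rintro x ⟨u, rfl⟩; exact key v u⟩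
    have hne : ∀ v, (Set.range (F v)).Nonempty := fun v => ⟨F v v, v, rfl⟩
    have T_le : ∀ v u, T v ≤ F v u := fun v u => csInf_le (hbdd v) ⟨u, rfl⟩
    have le_T : ∀ (v) (c : ℝ), (∀ u, c ≤ F v u) → c ≤ T v := fun v c h =>
      le_csInf (hne v) (by rintro x ⟨u, rfl⟩; exact h u)
    have T_lb : ∀ v, φ v - dd g a v ≤ T v := fun v => le_T v _ (key v)
    have hTv : ∀ v, T v = sInf (Set.range (F v)) := fun v => congrFun hT v
    clear_value T F
    have hTf : ∀ v, T v ≤ dd f a v := by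
      intro v
      have h := T_le v v
      simp only [hF, sub_self, map_zero, dd_zero hg] at h
      linarith
    have hTg : ∀ v, T (-v) ≤ dd g a v - φ v := by
      intro v
      have h := T_le (-v) 0
      simp only [hF, zero_sub, sub_zero, neg_neg, map_neg, dd_zero hf] at h
      linarith
    have Thom_le : ∀ (c : ℝ), 0 < c → ∀ v, T (c • v) ≤ c * T v := by
      intro c hc v
      have h1 : ∀ u, T (c • v) ≤ c * F v u := by
        intro u
        have h := T_le (c • v) (c • u)
        have e1 : c • u - c • v = c • (u - v) := by rw [smul_sub]
        have e2 : c • v - c • u = c • (v - u) := by rw [smul_sub]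
        simp only [hF, e1, e2, dd_smul hf a u hc, dd_smul hg a (u - v) hc, map_smul,
          smul_eq_mul] at h ⊢
        linarith
      have h2 : T (c • v) / c ≤ T v := by
        refine le_T v _ (fun u => ?_)
        rw [div_le_iff₀ hc, mul_comm]
        exact h1 u
      calc T (c • v) = c * (T (c • v) / c) := by field_simp
      _ ≤ c * T v := mul_le_mul_of_nonneg_left h2 hc.le
    have Thom : ∀ (c : ℝ), 0 < c → ∀ v, T (c • v) = c * T v := by
      intro c hc v
      refine le_antisymm (Thom_le c hc v) ?_
      have h := Thom_le c⁻¹ (by positivity) (c • v)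
      rw [smul_smul, inv_mul_cancel₀ hc.ne', one_smul] at h
      have h2 := mul_le_mul_of_nonneg_left h hc.le
      rw [← mul_assoc, mul_inv_cancel₀ hc.ne', one_mul] at h2
      linarith
    have Tadd : ∀ v w, T (v + w) ≤ T v + T w := by
      intro v w
      refine le_of_forall_pos_le_add (fun ε hε => ?_)
      obtain ⟨x1, hx1m, hx1⟩ := exists_lt_of_csInf_lt (hne v)
        (show sInf (Set.range (F v)) < T v + ε/2 by
          rw [← hTv _]; linarith [half_pos hε])
      obtain ⟨u1, rfl⟩ := hx1m
      obtain ⟨x2, hx2m, hx2⟩ := exists_lt_of_csInf_lt (hne w)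
        (show sInf (Set.range (F w)) < T w + ε/2 by
          rw [← hTv _]; linarith [half_pos hε])
      obtain ⟨u2, rfl⟩ := hx2m
      have h := T_le (v + w) (u1 + u2)
      have e : F (v+w) (u1+u2) ≤ F v u1 + F w u2 := by
        have d1 : dd f a (u1 + u2) ≤ dd f a u1 + dd f a u2 := dd_add_le hf a u1 u2
        have d2 : dd g a (u1 + u2 - (v + w)) ≤ dd g a (u1 - v) + dd g a (u2 - w) := by
          have h5 := dd_add_le hg a (u1 - v) (u2 - w)
          have e2 : u1 - v + (u2 - w) = u1 + u2 - (v + w) := by abel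
          rwa [e2] at h5
        have d3 : φ (v + w - (u1 + u2)) = φ (v - u1) + φ (w - u2) := by
          rw [← map_add]; congr 1; abel
        simp only [hF]
        linarith
      linarith
    have hT0 : (0:ℝ) ≤ T 0 := by
      have := T_lb 0
      simp only [map_zero, dd_zero hg, sub_zero, zero_sub] at this
      linarith
    obtain ⟨ψ₀, -, hψ₀⟩ := exists_extension_of_le_sublinear ⟨⊥, 0⟩ T
      (fun c hc x => Thom c hc x) Tadd
      (by
        rintro ⟨x, hx⟩
        have hx0 : x = 0 := (Submodule.mem_bot ℝ).1 hx
        subst hx0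
        simpa using hT0)
    set ψ : E →L[ℝ] ℝ := LinearMap.toContinuousLinearMap ψ₀ with hψdef
    have hψ : ∀ v, ψ v ≤ T v := fun v => hψ₀ v
    refine ⟨ψ, ?_, φ - ψ, ?_, ?_⟩
    · exact mem_subdiff_of_le_dd a ψ (fun v => (hψ v).trans (hTf v)) hf
    · refine mem_subdiff_of_le_dd a (φ - ψ) (fun v => ?_) hg
      have h1 : ψ (-v) ≤ dd g a v - φ v := (hψ (-v)).trans (hTg v)
      rw [map_neg] at h1
      have h2 : (φ - ψ) v = φ v - ψ v := rfl
      linarith [h1, h2.le, h2.ge]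
    · abel
  · rintro ⟨ψ₁, h1, ψ₂, h2, rfl⟩
    intro x
    have ha := h1 x
    have hb := h2 x
    simp only [ContinuousLinearMap.add_apply]
    linarith

end MRaux

namespace MRaux

variable {E : Type*} [NormedAddCommGroup E] [NormedSpace ℝ E]

lemma convexOn_sum_fin : ∀ (k : ℕ) (f : Fin k → E → ℝ),
    (∀ i, ConvexOn ℝ Set.univ (f i)) → ConvexOn ℝ Set.univ (fun x => ∑ i, f i x) := by
  intro k
  induction k with
  | zero => intro f hf; simpa using convexOn_const (0:ℝ) convex_univ
  | succ k ih =>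
    intro f hf
    have h : (fun x => ∑ i, f i x) = fun x => f 0 x + ∑ i : Fin k, f i.succ x := by
      funext x; rw [Fin.sum_univ_succ]
    rw [h]
    exact (hf 0).add (ih (fun i => f i.succ) (fun i => hf i.succ))

end MRaux

open MRaux in
theorem moreau_rockafellar'
    {E : Type*} [NormedAddCommGroup E] [NormedSpace ℝ E] [FiniteDimensional ℝ E]
    (k : ℕ) (f : Fin k → E → ℝ) (hf : ∀ i, ConvexOn ℝ Set.univ (f i)) (a : E) :
    subdifferential (fun x => ∑ i, f i x) a =
      {φ : E →L[ℝ] ℝ | ∃ g : Fin k → (E →L[ℝ] ℝ),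
        (∀ i, g i ∈ subdifferential (f i) a) ∧ φ = ∑ i, g i} := by
  induction k with
  | zero =>
    ext φ
    simp only [Set.mem_setOf_eq, Finset.univ_eq_empty, Finset.sum_empty]
    constructor
    · intro h
      refine ⟨Fin.elim0, fun i => i.elim0, ?_⟩
      have h0 : ∀ v, φ v ≤ 0 := by
        intro v
        have := h (a + v)
        simpa using this
      ext v
      have h1 := h0 v
      have h2 := h0 (-v)
      rw [map_neg] at h2
      have : φ v = 0 := le_antisymm h1 (by linarith)
      simpa using this
    · rintro ⟨g, -, rfl⟩
      intro x
      simp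
  | succ k ih =>
    have hrest : ConvexOn ℝ Set.univ (fun x => ∑ i : Fin k, f i.succ x) :=
      convexOn_sum_fin k (fun i => f i.succ) (fun i => hf i.succ)
    have e : (fun x => ∑ i, f i x) = fun x => f 0 x + ∑ i : Fin k, f i.succ x := by
      funext x; rw [Fin.sum_univ_succ]
    rw [e, two_fun (hf 0) hrest a]
    have hih := Set.ext_iff.1 (ih (fun i => f i.succ) (fun i => hf i.succ))
    ext φ
    simp only [Set.mem_setOf_eq]
    constructor
    · rintro ⟨ψ₁, hψ₁, ψ₂, hψ₂, rfl⟩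
      obtain ⟨g', hg', rfl⟩ := (hih ψ₂).1 hψ₂
      refine ⟨Fin.cons ψ₁ g', ?_, ?_⟩
      · intro i
        refine Fin.cases ?_ ?_ i
        · simpa using hψ₁
        · intro j; simpa using hg' j
      · rw [Fin.sum_univ_succ]
        simp
    · rintro ⟨g, hg, rfl⟩
      refine ⟨g 0, hg 0, ∑ i : Fin k, g i.succ,
        (hih _).2 ⟨fun i => g i.succ, fun i => hg i.succ, rfl⟩, ?_⟩
      rw [Fin.sum_univ_succ]


/-- Moreau–Rockafellar theorem: the subdifferential of a finite sum of convex functions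
`f₁, …, f_k` on a finite-dimensional real normed space is the Minkowski sum of the
subdifferentials: `∂(f₁ + ⋯ + f_k)(a) = ∂f₁(a) + ⋯ + ∂f_k(a)`. -/
theorem moreau_rockafellar
    {E : Type*} [NormedAddCommGroup E] [NormedSpace ℝ E] [FiniteDimensional ℝ E]
    (k : ℕ) (f : Fin k → E → ℝ) (hf : ∀ i, ConvexOn ℝ Set.univ (f i)) (a : E) :
    subdifferential (fun x => ∑ i, f i x) a =
      {φ : E →L[ℝ] ℝ | ∃ g : Fin k → (E →L[ℝ] ℝ),
        (∀ i, g i ∈ subdifferential (f i) a) ∧ φ = ∑ i, g i} := by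
  exact moreau_rockafellar' k f hf a
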